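/- Known pre-change coverage guarantee: suppose the pre-change distribution is known, i.e., 𝒫₀ = {F₀}. For every α ∈ (0,1), every T ∈ ℕ, every post-change class 𝒫₁, and every change detection stopping time τ satisfying P_{F₀,∞}(τ ≥ T) > 0, the confidence set C := {t ∈ ℕ : t ≤ τ, M_t < 2/(α r_t)}, constructed with any family (r_t) of almost surely strictly positive random variables, each independent of the observed data, satisfying E[r_t] = P_{F₀,∞}(τ ≥ t), satisfies P_{F₀,T,F₁}(T ∈ C | τ ≥ T) ≥ 1 − α for all F₁ ∈ 𝒫₁. -/

import Mathlib

open MeasureTheory ProbabilityTheory Filter Set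
open scoped ENNReal NNReal

namespace SeqChange

variable {𝒳 : Type*} [MeasurableSpace 𝒳]

/-- The σ-algebra on the sequence space generated by the coordinates with indices in `s`. -/
def coordSigma (𝒳 : Type*) [MeasurableSpace 𝒳] (s : Set ℕ) : MeasurableSpace (ℕ → 𝒳) :=
  ⨆ i ∈ s, MeasurableSpace.comap (fun ω : ℕ → 𝒳 => ω i) inferInstance

/-- The natural filtration `σ(X₁, …, Xₙ)` of the observation sequence (observations are
indexed from 1; coordinate 0 is unused). -/
def natFilt (𝒳 : Type*) [MeasurableSpace 𝒳] (n : ℕ) : MeasurableSpace (ℕ → 𝒳) :=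
  coordSigma 𝒳 {i | 1 ≤ i ∧ i ≤ n}

/-- `τ` is a stopping time with respect to the natural filtration of the observation
sequence, taking values in `ℕ ∪ {∞}`. -/
def IsStoppingTimeSeq (τ : (ℕ → 𝒳) → ℕ∞) : Prop :=
  ∀ n : ℕ, MeasurableSet[natFilt 𝒳 n] {ω | τ ω ≤ (n : ℕ∞)}

/-- `P` is the joint law of a sequence of independent observations `X₁, X₂, …` with
`Xₙ ~ ν n` for every `n ≥ 1`: a probability measure whose finite-dimensional
distributions on the coordinates with indices `≥ 1` are the corresponding products. -/
def IsProductLaw (P : Measure (ℕ → 𝒳)) (ν : ℕ → Measure 𝒳) : Prop :=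
  IsProbabilityMeasure P ∧
    ∀ s : Finset ℕ, (∀ i ∈ s, 1 ≤ i) → ∀ A : ℕ → Set 𝒳, (∀ i, MeasurableSet (A i)) →
      P {ω | ∀ i ∈ s, ω i ∈ A i} = ∏ i ∈ s, ν i (A i)

/-- `P` is the law `P_{F₀,T,F₁}`: independent coordinates, `Xₙ ~ F₀` for `n < T` and
`Xₙ ~ F₁` for `n ≥ T`. -/
def IsChangeLaw (P : Measure (ℕ → 𝒳)) (F₀ F₁ : Measure 𝒳) (T : ℕ) : Prop :=
  IsProductLaw P (fun n => if n < T then F₀ else F₁)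

/-- `P` is the law `P_{F₀,∞}`: all coordinates i.i.d. `F₀` (no change ever occurs). -/
def IsNoChangeLaw (P : Measure (ℕ → 𝒳)) (F₀ : Measure 𝒳) : Prop :=
  IsProductLaw P (fun _ => F₀)

/-- Under `Q`, the coordinates with indices in `I` are i.i.d. with law `ν`. -/
def IsIIDOn (Q : Measure (ℕ → 𝒳)) (ν : Measure 𝒳) (I : Set ℕ) : Prop :=
  IsProbabilityMeasure Q ∧
    ∀ s : Finset ℕ, (↑s ⊆ I) → ∀ A : ℕ → Set 𝒳, (∀ i, MeasurableSet (A i)) →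
      Q {ω | ∀ i ∈ s, ω i ∈ A i} = ∏ i ∈ s, ν (A i)

/-- Forward filtration `σ(X_t, …, X_n)`. -/
def fwdFilt (𝒳 : Type*) [MeasurableSpace 𝒳] (t n : ℕ) : MeasurableSpace (ℕ → 𝒳) :=
  coordSigma 𝒳 {i | t ≤ i ∧ i ≤ n}

/-- Backward filtration `σ(X_n, …, X_{t-1})`. -/
def bwdFilt (𝒳 : Type*) [MeasurableSpace 𝒳] (t n : ℕ) : MeasurableSpace (ℕ → 𝒳) :=
  coordSigma 𝒳 {i | n ≤ i ∧ i < t}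

/-- A forward `t`-delay e-process under the class `𝒫₁`: a nonnegative process
`(R n)_{n ≥ t}` adapted to the forward filtration `σ(X_t, …, X_n)` such that for every
`F₁ ∈ 𝒫₁`, every law `Q` under which `X_t, X_{t+1}, …` are i.i.d. `F₁`, and every
stopping time `κ ≥ t` of the forward filtration, `E_Q[R_κ] ≤ 1`. -/
def IsForwardEProcess (𝒫₁ : Set (Measure 𝒳)) (t : ℕ) (R : ℕ → (ℕ → 𝒳) → ℝ≥0∞) : Prop :=
  (∀ n, t ≤ n → Measurable[fwdFilt 𝒳 t n] (R n)) ∧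
    ∀ F₁ ∈ 𝒫₁, ∀ Q : Measure (ℕ → 𝒳), IsIIDOn Q F₁ {i | t ≤ i} →
      ∀ κ : (ℕ → 𝒳) → ℕ, (∀ ω, t ≤ κ ω) →
        (∀ n, MeasurableSet[fwdFilt 𝒳 t n] {ω | κ ω ≤ n}) →
        ∫⁻ ω, R (κ ω) ω ∂Q ≤ 1

/-- A backward `t`-delay e-process under the class `𝒫₀`: a nonnegative process
`(S n)_{1 ≤ n < t}` adapted to the backward filtration `σ(X_n, …, X_{t-1})` such that for
every `F₀ ∈ 𝒫₀`, every law `Q` under which `X₁, …, X_{t-1}` are i.i.d. `F₀`, and every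
stopping time `κ` of the backward filtration with `1 ≤ κ < t`, `E_Q[S_κ] ≤ 1`. -/
def IsBackwardEProcess (𝒫₀ : Set (Measure 𝒳)) (t : ℕ) (S : ℕ → (ℕ → 𝒳) → ℝ≥0∞) : Prop :=
  (∀ n, 1 ≤ n → n < t → Measurable[bwdFilt 𝒳 t n] (S n)) ∧
    ∀ F₀ ∈ 𝒫₀, ∀ Q : Measure (ℕ → 𝒳), IsIIDOn Q F₀ {i | 1 ≤ i ∧ i < t} →
      ∀ κ : (ℕ → 𝒳) → ℕ, (∀ ω, 1 ≤ κ ω ∧ κ ω < t) →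
        (∀ n, MeasurableSet[bwdFilt 𝒳 t n] {ω | n ≤ κ ω}) →
        ∫⁻ ω, S (κ ω) ω ∂Q ≤ 1

/-- The localization statistic `M_t` built from the estimator `T̂`, forward e-processes `R`
and backward e-processes `S`: `M_t = R^{(t)}_{T̂ - 1}` if `t < T̂ ≤ τ < ∞`, `M_t = 1` if
`t = T̂ ≤ τ < ∞`, `M_t = S^{(t)}_{T̂}` if `T̂ < t ≤ τ < ∞`, and `M_t = -∞` if `t > τ` or
`τ = ∞`. -/
noncomputable def eStat (τ : (ℕ → 𝒳) → ℕ∞) (That : (ℕ → 𝒳) → ℕ)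
    (R S : ℕ → ℕ → (ℕ → 𝒳) → ℝ≥0∞) (t : ℕ) (ω : ℕ → 𝒳) : EReal :=
  if (t : ℕ∞) ≤ τ ω ∧ τ ω ≠ ⊤ then
    if t < That ω then ((R t (That ω - 1) ω : ℝ≥0∞) : EReal)
    else if t = That ω then 1
    else ((S t (That ω) ω : ℝ≥0∞) : EReal)
  else ⊥

section Helpers

variable {𝒳 : Type*} [MeasurableSpace 𝒳]

lemma coordSigma_le (s : Set ℕ) : coordSigma 𝒳 s ≤ MeasurableSpace.pi := by
  refine iSup₂_le fun i _ => ?_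
  rw [MeasurableSpace.comap_le_iff_le_map]
  exact fun t ht => (measurable_pi_apply i) ht

lemma coordSigma_mono {s t : Set ℕ} (h : s ⊆ t) : coordSigma 𝒳 s ≤ coordSigma 𝒳 t :=
  biSup_mono h

lemma measurableSet_of_coordSigma {s : Set ℕ} {E : Set (ℕ → 𝒳)}
    (hE : MeasurableSet[coordSigma 𝒳 s] E) : MeasurableSet E :=
  coordSigma_le (𝒳 := 𝒳) s _ hE

lemma fwdFilt_mono {t m n : ℕ} (h : m ≤ n) : fwdFilt 𝒳 t m ≤ fwdFilt 𝒳 t n :=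
  coordSigma_mono fun i hi => ⟨hi.1, hi.2.trans h⟩

lemma bwdFilt_mono {t m n : ℕ} (h : n ≤ m) : bwdFilt 𝒳 t m ≤ bwdFilt 𝒳 t n :=
  coordSigma_mono fun i hi => ⟨h.trans hi.1, hi.2⟩

/-- Ville-type inequality for forward delay e-processes. -/
lemma ville_forward {𝒫₁ : Set (Measure 𝒳)} {T : ℕ} {R : ℕ → (ℕ → 𝒳) → ℝ≥0∞}
    (hR : IsForwardEProcess 𝒫₁ T R) {F₁ : Measure 𝒳} (hF₁ : F₁ ∈ 𝒫₁)
    {Q : Measure (ℕ → 𝒳)} (hQ : IsIIDOn Q F₁ {i | T ≤ i})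
    {c : ℝ≥0∞} :
    Q {ω | ∃ n, T ≤ n ∧ c ≤ R n ω} ≤ c⁻¹ := by
  classical
  set E : ℕ → Set (ℕ → 𝒳) := fun N => {ω | ∃ n, T ≤ n ∧ n ≤ N ∧ c ≤ R n ω} with hE
  have hRm : ∀ m, T ≤ m → MeasurableSet[fwdFilt 𝒳 T m] {ω | c ≤ R m ω} := by
    intro m hm
    exact (hR.1 m hm) measurableSet_Ici
  have hEmeas : ∀ N, MeasurableSet (E N) := by
    intro N
    have h1 : E N = ⋃ m ∈ Finset.Icc T N, {ω | c ≤ R m ω} := by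
      ext ω
      simp only [hE, mem_setOf_eq, mem_iUnion, Finset.mem_Icc, exists_prop]
      tauto
    rw [h1]
    exact Finset.measurableSet_biUnion _ fun m hm =>
      measurableSet_of_coordSigma (hRm m (Finset.mem_Icc.mp hm).1)
  have hbound : ∀ N, Q (E N) ≤ c⁻¹ := by
    intro N
    set κ : (ℕ → 𝒳) → ℕ :=
      fun ω => if ω ∈ E N then sInf {n | T ≤ n ∧ c ≤ R n ω} else max N T with hκ
    have hmemInf : ∀ ω ∈ E N, sInf {n | T ≤ n ∧ c ≤ R n ω} ∈ {n | T ≤ n ∧ c ≤ R n ω} := by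
      rintro ω ⟨n, hn1, _, hn3⟩
      exact Nat.sInf_mem ⟨n, hn1, hn3⟩
    have hκT : ∀ ω, T ≤ κ ω := by
      intro ω
      rw [hκ]
      by_cases hω : ω ∈ E N
      · simpa [hω] using (hmemInf ω hω).1
      · simp [hω, le_max_right]
    have hκstop : ∀ n, MeasurableSet[fwdFilt 𝒳 T n] {ω | κ ω ≤ n} := by
      intro n
      by_cases hn : max N T ≤ n
      · have huniv : {ω | κ ω ≤ n} = univ := by
          ext ω
          simp only [mem_setOf_eq, mem_univ, iff_true, hκ]
          by_cases hω : ω ∈ E N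
          · obtain ⟨m, hm1, hm2, hm3⟩ := id hω
            simp only [if_pos hω]
            exact le_trans (Nat.sInf_le ⟨hm1, hm3⟩) (le_trans hm2 (le_trans (le_max_left _ _) hn))
          · simp only [if_neg hω]; exact hn
        rw [huniv]; exact MeasurableSet.univ
      · have hset : {ω | κ ω ≤ n} = ⋃ m ∈ Finset.Icc T n, {ω | c ≤ R m ω} := by
          ext ω
          simp only [mem_setOf_eq, mem_iUnion, Finset.mem_Icc, exists_prop, hκ]
          constructor
          · intro h
            by_cases hω : ω ∈ E N
            · rw [if_pos hω] at h
              exact ⟨_, ⟨(hmemInf ω hω).1, h⟩, (hmemInf ω hω).2⟩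
            · rw [if_neg hω] at h; exact absurd h hn
          · rintro ⟨m, ⟨hm1, hm2⟩, hm3⟩
            have hmN : m ≤ N := by
              rcases lt_max_iff.mp (not_le.mp hn) with h | h
              · omega
              · omega
            have hω : ω ∈ E N := ⟨m, hm1, hmN, hm3⟩
            rw [if_pos hω]
            exact le_trans (Nat.sInf_le ⟨hm1, hm3⟩) hm2
        rw [hset]
        exact Finset.measurableSet_biUnion _ fun m hm =>
          fwdFilt_mono (Finset.mem_Icc.mp hm).2 _ (hRm m (Finset.mem_Icc.mp hm).1)
    have hint := hR.2 F₁ hF₁ Q hQ κ hκT hκstop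
    have hind : ∀ ω, (E N).indicator (fun _ => c) ω ≤ R (κ ω) ω := by
      intro ω
      by_cases hω : ω ∈ E N
      · rw [indicator_of_mem hω]
        have h1 := (hmemInf ω hω).2
        rw [hκ]; simp only [if_pos hω]; exact h1
      · rw [indicator_of_notMem hω]; exact zero_le
    have hmul : c * Q (E N) ≤ 1 := by
      calc c * Q (E N) = ∫⁻ ω, (E N).indicator (fun _ => c) ω ∂Q :=
            (lintegral_indicator_const (hEmeas N) c).symm
        _ ≤ ∫⁻ ω, R (κ ω) ω ∂Q := lintegral_mono hind
        _ ≤ 1 := hint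
    exact ENNReal.le_inv_iff_mul_le.mpr (by rwa [mul_comm])
  have hmono : Monotone E := fun N M h ω => by
    rintro ⟨n, hn1, hn2, hn3⟩; exact ⟨n, hn1, hn2.trans h, hn3⟩
  have hunion : {ω | ∃ n, T ≤ n ∧ c ≤ R n ω} = ⋃ N, E N := by
    ext ω
    simp only [mem_setOf_eq, mem_iUnion, hE]
    exact ⟨fun ⟨n, h1, h2⟩ => ⟨n, n, h1, le_refl n, h2⟩, fun ⟨N, n, h1, _, h3⟩ => ⟨n, h1, h3⟩⟩
  rw [hunion, hmono.directed_le.measure_iUnion]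
  exact iSup_le hbound

/-- Ville-type inequality for backward delay e-processes. -/
lemma ville_backward {F₀ : Measure 𝒳} {T : ℕ} {S : ℕ → (ℕ → 𝒳) → ℝ≥0∞}
    (hS : IsBackwardEProcess {F₀} T S)
    {Q : Measure (ℕ → 𝒳)} (hQ : IsIIDOn Q F₀ {i | 1 ≤ i ∧ i < T})
    {c : ℝ≥0∞} :
    Q {ω | ∃ n, 1 ≤ n ∧ n < T ∧ c ≤ S n ω} ≤ c⁻¹ := by
  classical
  by_cases hT2 : T ≤ 1
  · have : {ω : ℕ → 𝒳 | ∃ n, 1 ≤ n ∧ n < T ∧ c ≤ S n ω} = ∅ := by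
      ext ω; simp only [mem_setOf_eq, mem_empty_iff_false, iff_false, not_exists]
      intro n ⟨h1, h2, _⟩; omega
    rw [this, measure_empty]; exact zero_le
  push_neg at hT2
  set E : Set (ℕ → 𝒳) := {ω | ∃ n, 1 ≤ n ∧ n < T ∧ c ≤ S n ω} with hE
  have hSm : ∀ m, 1 ≤ m → m < T → MeasurableSet[bwdFilt 𝒳 T m] {ω | c ≤ S m ω} := by
    intro m h1 h2
    exact (hS.1 m h1 h2) measurableSet_Ici
  set κ : (ℕ → 𝒳) → ℕ :=
    fun ω => if ω ∈ E then sSup {n | 1 ≤ n ∧ n < T ∧ c ≤ S n ω} else 1 with hκ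
  have hbdd : ∀ ω, BddAbove {n | 1 ≤ n ∧ n < T ∧ c ≤ S n ω} :=
    fun ω => ⟨T, fun x hx => hx.2.1.le⟩
  have hmemSup : ∀ ω ∈ E, sSup {n | 1 ≤ n ∧ n < T ∧ c ≤ S n ω} ∈
      {n | 1 ≤ n ∧ n < T ∧ c ≤ S n ω} := by
    rintro ω ⟨n, hn⟩
    exact Nat.sSup_mem ⟨n, hn⟩ (hbdd ω)
  have hκrange : ∀ ω, 1 ≤ κ ω ∧ κ ω < T := by
    intro ω
    rw [hκ]
    by_cases hω : ω ∈ E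
    · simp only [if_pos hω]; exact ⟨(hmemSup ω hω).1, (hmemSup ω hω).2.1⟩
    · simp only [if_neg hω]; exact ⟨le_refl 1, hT2⟩
  have hκstop : ∀ n, MeasurableSet[bwdFilt 𝒳 T n] {ω | n ≤ κ ω} := by
    intro n
    by_cases hn : n ≤ 1
    · have : {ω | n ≤ κ ω} = univ := by
        ext ω; simp only [mem_setOf_eq, mem_univ, iff_true]
        exact le_trans hn (hκrange ω).1
      rw [this]; exact MeasurableSet.univ
    · push_neg at hn
      have hset : {ω | n ≤ κ ω} = ⋃ m ∈ Finset.Ico n T, {ω | c ≤ S m ω} := by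
        ext ω
        simp only [mem_setOf_eq, mem_iUnion, Finset.mem_Ico, exists_prop, hκ]
        constructor
        · intro h
          by_cases hω : ω ∈ E
          · rw [if_pos hω] at h
            exact ⟨_, ⟨h, (hmemSup ω hω).2.1⟩, (hmemSup ω hω).2.2⟩
          · rw [if_neg hω] at h; omega
        · rintro ⟨m, ⟨hm1, hm2⟩, hm3⟩
          have hω : ω ∈ E := ⟨m, by omega, hm2, hm3⟩
          rw [if_pos hω]
          exact le_trans hm1 (le_csSup (hbdd ω) ⟨by omega, hm2, hm3⟩)
      rw [hset]
      exact Finset.measurableSet_biUnion _ fun m hm =>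
        bwdFilt_mono (Finset.mem_Ico.mp hm).1 _
          (hSm m (by have := (Finset.mem_Ico.mp hm).1; omega) (Finset.mem_Ico.mp hm).2)
  have hint := hS.2 F₀ rfl Q hQ κ hκrange hκstop
  have hEmeas : MeasurableSet E := by
    have h1 : E = ⋃ m ∈ Finset.Ico 1 T, {ω | c ≤ S m ω} := by
      ext ω
      simp only [hE, mem_setOf_eq, mem_iUnion, Finset.mem_Ico, exists_prop]
      tauto
    rw [h1]
    exact Finset.measurableSet_biUnion _ fun m hm =>
      measurableSet_of_coordSigma (hSm m (Finset.mem_Ico.mp hm).1 (Finset.mem_Ico.mp hm).2)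
  have hind : ∀ ω, E.indicator (fun _ => c) ω ≤ S (κ ω) ω := by
    intro ω
    by_cases hω : ω ∈ E
    · rw [indicator_of_mem hω]
      have h1 := (hmemSup ω hω).2.2
      rw [hκ]; simp only [if_pos hω]; exact h1
    · rw [indicator_of_notMem hω]; exact zero_le
  have hmul : c * Q E ≤ 1 := by
    calc c * Q E = ∫⁻ ω, E.indicator (fun _ => c) ω ∂Q :=
          (lintegral_indicator_const hEmeas c).symm
      _ ≤ ∫⁻ ω, S (κ ω) ω ∂Q := lintegral_mono hind
      _ ≤ 1 := hint
  exact ENNReal.le_inv_iff_mul_le.mpr (by rwa [mul_comm])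

end Helpers

section Helpers2

variable {𝒳 : Type*} [MeasurableSpace 𝒳]

/-- cylinder sets over `s` -/
def cyls (𝒳 : Type*) [MeasurableSpace 𝒳] (s : Set ℕ) : Set (Set (ℕ → 𝒳)) :=
  {E | ∃ u : Finset ℕ, ↑u ⊆ s ∧ ∃ A : ℕ → Set 𝒳, (∀ i, MeasurableSet (A i)) ∧
      E = {ω | ∀ i ∈ u, ω i ∈ A i}}

lemma cyls_mem_coordSigma {s : Set ℕ} {E : Set (ℕ → 𝒳)} (hE : E ∈ cyls 𝒳 s) :
    MeasurableSet[coordSigma 𝒳 s] E := by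
  obtain ⟨u, hu, A, hA, rfl⟩ := hE
  have h : {ω : ℕ → 𝒳 | ∀ i ∈ u, ω i ∈ A i} = ⋂ i ∈ u, (fun ω : ℕ → 𝒳 => ω i) ⁻¹' A i := by
    ext ω; simp
  rw [h]
  refine MeasurableSet.biInter u.countable_toSet fun i hi => ?_
  have h1 : MeasurableSpace.comap (fun ω : ℕ → 𝒳 => ω i) inferInstance ≤ coordSigma 𝒳 s :=
    le_iSup₂ (f := fun i (_ : i ∈ s) =>
      MeasurableSpace.comap (fun ω : ℕ → 𝒳 => ω i) inferInstance) i (hu hi)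
  exact h1 _ ⟨A i, hA i, rfl⟩

lemma isPiSystem_cyls (s : Set ℕ) : IsPiSystem (cyls 𝒳 s) := by
  rintro E ⟨u, hu, A, hA, rfl⟩ E' ⟨u', hu', A', hA', rfl⟩ -
  refine ⟨u ∪ u', by simp [Finset.coe_union, union_subset hu hu'],
    fun i => (if i ∈ u then A i else univ) ∩ (if i ∈ u' then A' i else univ),
    fun i => MeasurableSet.inter (by by_cases h : i ∈ u <;> simp [h, hA i])
      (by by_cases h : i ∈ u' <;> simp [h, hA' i]), ?_⟩
  ext ω
  simp only [mem_inter_iff, mem_setOf_eq, Finset.mem_union]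
  constructor
  · rintro ⟨h1, h2⟩ i hi
    constructor
    · split <;> simp_all
    · split <;> simp_all
  · intro h
    constructor
    · intro i hi
      have := (h i (Or.inl hi)).1
      simpa [hi] using this
    · intro i hi
      have := (h i (Or.inr hi)).2
      simpa [hi] using this

lemma coordSigma_eq_generateFrom (s : Set ℕ) :
    coordSigma 𝒳 s = MeasurableSpace.generateFrom (cyls 𝒳 s) := by
  apply le_antisymm
  · refine iSup₂_le fun i hi => ?_
    rw [MeasurableSpace.comap_le_iff_le_map]
    intro t ht
    refine MeasurableSpace.measurableSet_generateFrom ?_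
    exact ⟨{i}, by simpa using hi, fun j => if j = i then t else univ,
      fun j => by by_cases h : j = i <;> simp [h, ht], by ext ω; simp⟩
  · rw [MeasurableSpace.generateFrom_le_iff]
    exact fun E hE => cyls_mem_coordSigma hE

lemma productLaw_agree {P P' : Measure (ℕ → 𝒳)} {ν ν' : ℕ → Measure 𝒳}
    (hP : IsProductLaw P ν) (hP' : IsProductLaw P' ν')
    {s : Set ℕ} (hs1 : ∀ i ∈ s, 1 ≤ i) (hνν' : ∀ i ∈ s, ν i = ν' i)
    {E : Set (ℕ → 𝒳)} (hE : MeasurableSet[coordSigma 𝒳 s] E) : P E = P' E := by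
  haveI := hP.1; haveI := hP'.1
  refine MeasurableSpace.induction_on_inter (m := coordSigma 𝒳 s) (C := fun E _ => P E = P' E)
    (coordSigma_eq_generateFrom s) (isPiSystem_cyls s) (by simp) ?_ ?_ ?_ _ hE
  · rintro E ⟨u, hu, A, hA, rfl⟩
    rw [hP.2 u (fun i hi => hs1 i (hu hi)) A hA, hP'.2 u (fun i hi => hs1 i (hu hi)) A hA]
    exact Finset.prod_congr rfl fun i hi => by rw [hνν' i (hu hi)]
  · intro t ht h
    have htm : MeasurableSet t := measurableSet_of_coordSigma ht
    rw [measure_compl htm (measure_ne_top _ _), measure_compl htm (measure_ne_top _ _),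
      measure_univ, measure_univ, h]
  · intro f hdisj hfm hf
    rw [measure_iUnion hdisj fun i => measurableSet_of_coordSigma (hfm i),
      measure_iUnion hdisj fun i => measurableSet_of_coordSigma (hfm i)]
    exact tsum_congr hf

lemma ereal_coe_le_coe_ennreal {x : ℝ} {y : ℝ≥0∞} (hx : 0 ≤ x)
    (h : ((x : ℝ) : EReal) ≤ (y : EReal)) : ENNReal.ofReal x ≤ y := by
  rw [← EReal.coe_ennreal_le_coe_ennreal_iff, EReal.coe_ennreal_ofReal]
  simpa [max_eq_left hx] using h

lemma enat_le_compl {T : ℕ} (hT : 1 ≤ T) (x : ℕ∞) :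
    x ≤ ((T - 1 : ℕ) : ℕ∞) ↔ ¬ ((T : ℕ) : ℕ∞) ≤ x := by
  induction x using ENat.recTopCoe with
  | top => simp
  | coe k =>
    rw [Nat.cast_le, Nat.cast_le]
    omega

end Helpers2

section Helpers3

variable {𝒳 : Type*} [MeasurableSpace 𝒳]

lemma measurableSet_tau_ge_filt {τ : (ℕ → 𝒳) → ℕ∞} (hτ : IsStoppingTimeSeq τ)
    {T : ℕ} (hT : 1 ≤ T) :
    MeasurableSet[natFilt 𝒳 (T - 1)] {ω | ((T : ℕ) : ℕ∞) ≤ τ ω} := by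
  have h2 : {ω | ((T : ℕ) : ℕ∞) ≤ τ ω} = {ω | τ ω ≤ ((T - 1 : ℕ) : ℕ∞)}ᶜ := by
    ext ω
    simp only [mem_compl_iff, mem_setOf_eq]
    rw [enat_le_compl hT]
    tauto
  rw [h2]
  exact (hτ (T - 1)).compl

lemma measurableSet_tau_ge {τ : (ℕ → 𝒳) → ℕ∞} (hτ : IsStoppingTimeSeq τ)
    {T : ℕ} (hT : 1 ≤ T) : MeasurableSet {ω | ((T : ℕ) : ℕ∞) ≤ τ ω} :=
  measurableSet_of_coordSigma (measurableSet_tau_ge_filt hτ hT)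

lemma measurableSet_tau_netop {τ : (ℕ → 𝒳) → ℕ∞} (hτ : IsStoppingTimeSeq τ) :
    MeasurableSet {ω | τ ω ≠ ⊤} := by
  have h : {ω | τ ω ≠ ⊤} = ⋃ n : ℕ, {ω | τ ω ≤ (n : ℕ∞)} := by
    ext ω
    simp only [mem_setOf_eq, mem_iUnion]
    constructor
    · intro h
      obtain ⟨k, hk⟩ := WithTop.ne_top_iff_exists.mp h
      exact ⟨k, le_of_eq hk.symm⟩
    · rintro ⟨n, hn⟩ htop
      rw [htop] at hn
      simp at hn
  rw [h]
  exact MeasurableSet.iUnion fun n => measurableSet_of_coordSigma (hτ n)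

lemma measurable_eStat {τ : (ℕ → 𝒳) → ℕ∞} (hτ : IsStoppingTimeSeq τ)
    {That : (ℕ → 𝒳) → ℕ} (hThatMeas : Measurable That)
    (hThat : ∀ ω, τ ω ≠ ⊤ → 1 ≤ That ω)
    {R S : ℕ → ℕ → (ℕ → 𝒳) → ℝ≥0∞} {T : ℕ} (hT : 1 ≤ T)
    (hRmeas : ∀ n, T ≤ n → Measurable (R T n))
    (hSmeas : ∀ n, 1 ≤ n → n < T → Measurable (S T n)) :
    Measurable (eStat τ That R S T) := by
  classical
  set f : ℕ → (ℕ → 𝒳) → EReal := fun n ω =>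
    if n = 0 then (0 : EReal) else if T < n then ((R T (n - 1) ω : ℝ≥0∞) : EReal)
    else if T = n then 1 else ((S T n ω : ℝ≥0∞) : EReal) with hf
  have heq : eStat τ That R S T = fun ω =>
      if ((T : ℕ∞) ≤ τ ω ∧ τ ω ≠ ⊤) then f (That ω) ω else ⊥ := by
    funext ω
    simp only [eStat, hf]
    by_cases hc : ((T : ℕ∞) ≤ τ ω ∧ τ ω ≠ ⊤)
    · rw [if_pos hc, if_pos hc]
      have h1 : ¬ (That ω = 0) := by have := hThat ω hc.2; omega
      rw [if_neg h1]
    · rw [if_neg hc, if_neg hc]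
  rw [heq]
  have hcond : MeasurableSet {ω | ((T : ℕ∞) ≤ τ ω ∧ τ ω ≠ ⊤)} :=
    (measurableSet_tau_ge hτ hT).inter (measurableSet_tau_netop hτ)
  refine Measurable.ite hcond ?_ measurable_const
  have hfm : ∀ n, Measurable (f n) := by
    intro n
    rw [hf]
    by_cases h0 : n = 0
    · simp only [if_pos h0]; exact measurable_const
    · simp only [if_neg h0]
      by_cases h1 : T < n
      · simp only [if_pos h1]
        exact measurable_coe_ennreal_ereal.comp (hRmeas (n - 1) (by omega))
      · simp only [if_neg h1]
        by_cases h2 : T = n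
        · simp only [if_pos h2]; exact measurable_const
        · simp only [if_neg h2]
          exact measurable_coe_ennreal_ereal.comp (hSmeas n (by omega) (by omega))
  have houter : Measurable (fun p : (ℕ → 𝒳) × ℕ => f p.2 p.1) :=
    measurable_from_prod_countable_left fun n => hfm n
  exact houter.comp (measurable_id.prodMk hThatMeas)

end Helpers3
/-- Known pre-change coverage guarantee: if the pre-change distribution
`F₀` is known, then for every `α ∈ (0,1)`, `T ∈ ℕ`, post-change class `𝒫₁`, and stopping
time `τ` with `P_{F₀,∞}(τ ≥ T) > 0`, the confidence set
`C = {t ≤ τ : M_t < 2/(α r_t)}` built from any data-independent, a.s. strictly positive,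
unbiased estimators `r_t` of `P_{F₀,∞}(τ ≥ t)` satisfies
`P_{F₀,T,F₁}(T ∈ C | τ ≥ T) ≥ 1 − α` for every `F₁ ∈ 𝒫₁`. -/
theorem known_prechange_coverage
    {𝒳 : Type*} [MeasurableSpace 𝒳]
    (F₀ : Measure 𝒳) (𝒫₁ : Set (Measure 𝒳)) (hF₀ : F₀ ∉ 𝒫₁)
    (τ : (ℕ → 𝒳) → ℕ∞) (hτ : IsStoppingTimeSeq τ)
    (That : (ℕ → 𝒳) → ℕ) (hThatMeas : Measurable That)
    (hThat : ∀ ω, τ ω ≠ ⊤ → 1 ≤ That ω ∧ (That ω : ℕ∞) ≤ τ ω)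
    (R S : ℕ → ℕ → (ℕ → 𝒳) → ℝ≥0∞)
    (hR : ∀ t : ℕ, 1 ≤ t → IsForwardEProcess 𝒫₁ t (R t))
    (hS : ∀ t : ℕ, 1 ≤ t → IsBackwardEProcess {F₀} t (S t))
    (α : ℝ) (hα : α ∈ Set.Ioo (0 : ℝ) 1)
    (T : ℕ) (hT : 1 ≤ T)
    -- the auxiliary randomization carrying the estimators `r_t`, independent of the data
    {Ωa : Type*} [MeasurableSpace Ωa] (μa : Measure Ωa) [IsProbabilityMeasure μa]
    (r : ℕ → Ωa → ℝ) (hrmeas : ∀ t, Measurable (r t))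
    (hrpos : ∀ t, ∀ᵐ a ∂μa, 0 < r t a) (hrint : ∀ t, Integrable (r t) μa)
    (Pinf : Measure (ℕ → 𝒳)) (hPinf : IsNoChangeLaw Pinf F₀)
    (hrunb : ∀ t : ℕ, ∫ a, r t a ∂μa = (Pinf {ω | (t : ℕ∞) ≤ τ ω}).toReal)
    (hpos : Pinf {ω | (T : ℕ∞) ≤ τ ω} ≠ 0)
    (F₁ : Measure 𝒳) (hF₁ : F₁ ∈ 𝒫₁)
    (P : Measure (ℕ → 𝒳)) (hP : IsChangeLaw P F₀ F₁ T) :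
    ENNReal.ofReal (1 - α) ≤
      ProbabilityTheory.cond (P.prod μa) {q : (ℕ → 𝒳) × Ωa | (T : ℕ∞) ≤ τ q.1}
        {q : (ℕ → 𝒳) × Ωa |
          T ∈ {t : ℕ | 1 ≤ t ∧ (t : ℕ∞) ≤ τ q.1 ∧
            eStat τ That R S t q.1 < ((2 / (α * r t q.2) : ℝ) : EReal)}} := by
  classical
  obtain ⟨hα0, hα1⟩ := hα
  haveI hPprob : IsProbabilityMeasure P := hP.1
  haveI hPinfprob : IsProbabilityMeasure Pinf := hPinf.1
  set Sτ : Set (ℕ → 𝒳) := {ω | (T : ℕ∞) ≤ τ ω} with hSτdef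
  have hSτm : MeasurableSet Sτ := measurableSet_tau_ge hτ hT
  have hPSτ : P Sτ = Pinf Sτ := by
    refine productLaw_agree hP hPinf (s := {i | 1 ≤ i ∧ i ≤ T - 1}) (fun i hi => hi.1)
      (fun i hi => by
        obtain ⟨h1, h2⟩ := hi
        simp only [if_pos (show i < T by omega)]) ?_
    exact measurableSet_tau_ge_filt hτ hT
  set p : ℝ≥0∞ := Pinf Sτ with hpdef
  have hp0 : p ≠ 0 := hpos
  have hptop : p ≠ ⊤ := measure_ne_top _ _
  have hiid1 : IsIIDOn P F₁ {i | T ≤ i} := by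
    refine ⟨hP.1, fun s hs A hA => ?_⟩
    rw [hP.2 s (fun i hi => le_trans hT (hs hi)) A hA]
    exact Finset.prod_congr rfl fun i hi => by
      simp only [if_neg (show ¬ i < T from not_lt.mpr (hs hi))]
  have hiid0 : IsIIDOn P F₀ {i | 1 ≤ i ∧ i < T} := by
    refine ⟨hP.1, fun s hs A hA => ?_⟩
    rw [hP.2 s (fun i hi => (hs hi).1) A hA]
    exact Finset.prod_congr rfl fun i hi => by simp only [if_pos (hs hi).2]
  have hRTmeas : ∀ n, T ≤ n → Measurable (R T n) := fun n hn =>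
    ((hR T hT).1 n hn).mono (coordSigma_le _) le_rfl
  have hSTmeas : ∀ n, 1 ≤ n → n < T → Measurable (S T n) := fun n h1 h2 =>
    ((hS T hT).1 n h1 h2).mono (coordSigma_le _) le_rfl
  have hestat : Measurable (eStat τ That R S T) :=
    measurable_eStat hτ hThatMeas (fun ω h => (hThat ω h).1) hT hRTmeas hSTmeas
  set Bad : Set ((ℕ → 𝒳) × Ωa) :=
    {q | q.1 ∈ Sτ ∧ ((2 / (α * r T q.2) : ℝ) : EReal) ≤ eStat τ That R S T q.1} with hBaddef
  have hthresh_meas :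
      Measurable (fun q : (ℕ → 𝒳) × Ωa => ((2 / (α * r T q.2) : ℝ) : EReal)) :=
    measurable_coe_real_ereal.comp
      (measurable_const.div (((hrmeas T).comp measurable_snd).const_mul α))
  have hBadm : MeasurableSet Bad := by
    have h1 : Bad = (Prod.fst ⁻¹' Sτ) ∩
        {q : (ℕ → 𝒳) × Ωa |
          ((2 / (α * r T q.2) : ℝ) : EReal) ≤ eStat τ That R S T q.1} := rfl
    rw [h1]
    exact (hSτm.preimage measurable_fst).inter
      (measurableSet_le hthresh_meas (hestat.comp measurable_fst))
  have hslice : ∀ᵐ a ∂μa, P ((fun ω => (ω, a)) ⁻¹' Bad) ≤ ENNReal.ofReal (α * r T a) := by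
    filter_upwards [hrpos T] with a hra
    set creal : ℝ := 2 / (α * r T a) with hcrealdef
    have hcreal : 0 < creal := div_pos two_pos (mul_pos hα0 hra)
    set c : ℝ≥0∞ := ENNReal.ofReal creal with hcdef
    have hkey : P ((fun ω => (ω, a)) ⁻¹' Bad) ≤ c⁻¹ + c⁻¹ := by
      by_cases hc1 : creal ≤ 1
      · have h1c : (1 : ℝ≥0∞) ≤ c⁻¹ := by
          refine ENNReal.le_inv_iff_mul_le.mpr ?_
          rw [one_mul, hcdef]
          calc ENNReal.ofReal creal ≤ ENNReal.ofReal 1 := ENNReal.ofReal_le_ofReal hc1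
            _ = 1 := ENNReal.ofReal_one
        calc P ((fun ω => (ω, a)) ⁻¹' Bad) ≤ 1 := prob_le_one
          _ ≤ c⁻¹ := h1c
          _ ≤ c⁻¹ + c⁻¹ := le_self_add
      · push_neg at hc1
        have hsub : (fun ω => (ω, a)) ⁻¹' Bad ⊆
            {ω | ∃ n, T ≤ n ∧ c ≤ R T n ω} ∪ {ω | ∃ n, 1 ≤ n ∧ n < T ∧ c ≤ S T n ω} := by
          rintro ω ⟨hω1, hω2⟩
          have hτtop : τ ω ≠ ⊤ := by
            intro htop
            have hnc : ¬ ((T : ℕ∞) ≤ τ ω ∧ τ ω ≠ ⊤) := fun hc => hc.2 htop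
            have hb : eStat τ That R S T ω = ⊥ := by
              simp only [eStat, if_neg hnc]
            rw [hb] at hω2
            exact absurd hω2 (not_le.mpr (EReal.bot_lt_coe creal))
          obtain ⟨hT1, hT2⟩ := hThat ω hτtop
          have hcond : ((T : ℕ∞) ≤ τ ω ∧ τ ω ≠ ⊤) := ⟨hω1, hτtop⟩
          rcases lt_trichotomy T (That ω) with h | h | h
          · left
            refine ⟨That ω - 1, by omega, ?_⟩
            have hval : eStat τ That R S T ω = ((R T (That ω - 1) ω : ℝ≥0∞) : EReal) := by
              simp only [eStat, if_pos hcond, if_pos h]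
            rw [hval] at hω2
            exact ereal_coe_le_coe_ennreal hcreal.le hω2
          · exfalso
            have hval : eStat τ That R S T ω = 1 := by
              simp only [eStat, if_pos hcond, if_neg (show ¬ T < That ω by omega), if_pos h]
            rw [hval] at hω2
            have h2 : ((creal : ℝ) : EReal) ≤ ((1 : ℝ) : EReal) := by
              rwa [EReal.coe_one]
            exact absurd (EReal.coe_le_coe_iff.mp h2) (not_le.mpr hc1)
          · right
            refine ⟨That ω, hT1, h, ?_⟩
            have hval : eStat τ That R S T ω = ((S T (That ω) ω : ℝ≥0∞) : EReal) := by
              simp only [eStat, if_pos hcond, if_neg (show ¬ T < That ω by omega),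
                if_neg (show ¬ T = That ω by omega)]
            rw [hval] at hω2
            exact ereal_coe_le_coe_ennreal hcreal.le hω2
        calc P ((fun ω => (ω, a)) ⁻¹' Bad)
            ≤ P ({ω | ∃ n, T ≤ n ∧ c ≤ R T n ω} ∪
                {ω | ∃ n, 1 ≤ n ∧ n < T ∧ c ≤ S T n ω}) := measure_mono hsub
          _ ≤ P {ω | ∃ n, T ≤ n ∧ c ≤ R T n ω} +
              P {ω | ∃ n, 1 ≤ n ∧ n < T ∧ c ≤ S T n ω} := measure_union_le _ _
          _ ≤ c⁻¹ + c⁻¹ :=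
              add_le_add (ville_forward (hR T hT) hF₁ hiid1) (ville_backward (hS T hT) hiid0)
    have hcinv : c⁻¹ = ENNReal.ofReal (α * r T a / 2) := by
      rw [hcdef, ← ENNReal.ofReal_inv_of_pos hcreal, hcrealdef, inv_div]
    calc P ((fun ω => (ω, a)) ⁻¹' Bad) ≤ c⁻¹ + c⁻¹ := hkey
      _ = ENNReal.ofReal (α * r T a / 2) + ENNReal.ofReal (α * r T a / 2) := by rw [hcinv]
      _ = ENNReal.ofReal (α * r T a / 2 + α * r T a / 2) :=
          (ENNReal.ofReal_add (by positivity) (by positivity)).symm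
      _ = ENNReal.ofReal (α * r T a) := by rw [add_halves]
  have hBadP : (P.prod μa) Bad ≤ ENNReal.ofReal α * p := by
    rw [Measure.prod_apply_symm hBadm]
    calc ∫⁻ a, P ((fun ω => (ω, a)) ⁻¹' Bad) ∂μa
        ≤ ∫⁻ a, ENNReal.ofReal (α * r T a) ∂μa := lintegral_mono_ae hslice
      _ = ENNReal.ofReal (∫ a, α * r T a ∂μa) := by
          rw [← ofReal_integral_eq_lintegral_ofReal ((hrint T).const_mul α)]
          filter_upwards [hrpos T] with a ha
          positivity
      _ = ENNReal.ofReal (α * ∫ a, r T a ∂μa) := by rw [integral_const_mul]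
      _ = ENNReal.ofReal α * ENNReal.ofReal (∫ a, r T a ∂μa) := ENNReal.ofReal_mul hα0.le
      _ = ENNReal.ofReal α * p := by
          rw [hrunb T, ENNReal.ofReal_toReal (measure_ne_top _ _)]
  have hA : MeasurableSet {q : (ℕ → 𝒳) × Ωa | (T : ℕ∞) ≤ τ q.1} :=
    hSτm.preimage measurable_fst
  set B := {q : (ℕ → 𝒳) × Ωa | T ∈ {t : ℕ | 1 ≤ t ∧ (t : ℕ∞) ≤ τ q.1 ∧
      eStat τ That R S t q.1 < ((2 / (α * r t q.2) : ℝ) : EReal)}} with hBdef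
  have hμA : (P.prod μa) {q : (ℕ → 𝒳) × Ωa | (T : ℕ∞) ≤ τ q.1} = p := by
    have h1 : {q : (ℕ → 𝒳) × Ωa | (T : ℕ∞) ≤ τ q.1} = Sτ ×ˢ (univ : Set Ωa) := by
      ext q
      exact ⟨fun h => ⟨h, trivial⟩, fun h => h.1⟩
    rw [h1, Measure.prod_prod, measure_univ, mul_one, hPSτ]
  have hsubA : {q : (ℕ → 𝒳) × Ωa | (T : ℕ∞) ≤ τ q.1} ⊆
      ({q : (ℕ → 𝒳) × Ωa | (T : ℕ∞) ≤ τ q.1} ∩ B) ∪ Bad := by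
    intro q hq
    by_cases hb : q ∈ B
    · exact Or.inl ⟨hq, hb⟩
    · refine Or.inr ⟨hq, ?_⟩
      rw [hBdef] at hb
      simp only [mem_setOf_eq] at hb
      push_neg at hb
      exact hb hT hq
  have h1 : p ≤ (P.prod μa) ({q : (ℕ → 𝒳) × Ωa | (T : ℕ∞) ≤ τ q.1} ∩ B) +
      ENNReal.ofReal α * p := by
    calc p = (P.prod μa) {q : (ℕ → 𝒳) × Ωa | (T : ℕ∞) ≤ τ q.1} := hμA.symm
      _ ≤ (P.prod μa) (({q : (ℕ → 𝒳) × Ωa | (T : ℕ∞) ≤ τ q.1} ∩ B) ∪ Bad) :=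
          measure_mono hsubA
      _ ≤ (P.prod μa) ({q : (ℕ → 𝒳) × Ωa | (T : ℕ∞) ≤ τ q.1} ∩ B) + (P.prod μa) Bad :=
          measure_union_le _ _
      _ ≤ _ + ENNReal.ofReal α * p := add_le_add_right hBadP _
  have h2 : ENNReal.ofReal (1 - α) * p ≤
      (P.prod μa) ({q : (ℕ → 𝒳) × Ωa | (T : ℕ∞) ≤ τ q.1} ∩ B) := by
    have e1 : ENNReal.ofReal (1 - α) * p = p - ENNReal.ofReal α * p := by
      rw [ENNReal.ofReal_sub 1 hα0.le, ENNReal.ofReal_one,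
        ENNReal.sub_mul (fun _ _ => hptop), one_mul]
    rw [e1]
    exact tsub_le_iff_right.mpr h1
  rw [cond_apply hA, hμA]
  calc ENNReal.ofReal (1 - α) = ENNReal.ofReal (1 - α) * p * p⁻¹ := by
        rw [mul_assoc, ENNReal.mul_inv_cancel hp0 hptop, mul_one]
    _ ≤ (P.prod μa) ({q : (ℕ → 𝒳) × Ωa | (T : ℕ∞) ≤ τ q.1} ∩ B) * p⁻¹ :=
        mul_le_mul_left h2 _
    _ = p⁻¹ * (P.prod μa) ({q : (ℕ → 𝒳) × Ωa | (T : ℕ∞) ≤ τ q.1} ∩ B) := mul_comm _ _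

end SeqChange
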